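/- arXiv:1206.0513 — 3 statements merged into one kernel-verified Lean document; each statement's English description precedes it below -/
import Mathlib

section
/- The tensor products of integer translates of the blending spline φ form a bivariate partition of unity: for all x, y ∈ ℝ, the family (fun p : ℤ × ℤ => φ(x − p.1) · φ(y − p.2)) has sum 1. -/
open Real

/-- The cardinal cubic B-spline supported on `[0, 4]`. -/
noncomputable def cubicBSpline (x : ℝ) : ℝ :=
  if x ≤ 0 then 0
  else if x ≤ 1 then x ^ 3 / 6
  else if x ≤ 2 then (-3 * x ^ 3 + 12 * x ^ 2 - 12 * x + 4) / 6
  else if x ≤ 3 then (3 * x ^ 3 - 24 * x ^ 2 + 60 * x - 44) / 6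
  else if x ≤ 4 then (4 - x) ^ 3 / 6
  else 0

/-- The blending spline `φ(x) = (1/2)·N(2x+3) + N(2x+2) + (1/2)·N(2x+1)`. -/
noncomputable def blendSpline (x : ℝ) : ℝ :=
  (1 / 2) * cubicBSpline (2 * x + 3) + cubicBSpline (2 * x + 2) +
    (1 / 2) * cubicBSpline (2 * x + 1)

lemma N0 {x : ℝ} (h : x ≤ 0) : cubicBSpline x = 0 := by
  simp [cubicBSpline, h]

lemma N5 {x : ℝ} (h : 4 ≤ x) : cubicBSpline x = 0 := by
  unfold cubicBSpline
  split_ifs with h1 h2 h3 h4 h5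
  · rfl
  · linarith
  · linarith
  · linarith
  · have hx : x = 4 := le_antisymm h5 h
    subst hx; norm_num
  · rfl

lemma N1 {x : ℝ} (h0 : 0 ≤ x) (h1 : x ≤ 1) : cubicBSpline x = x ^ 3 / 6 := by
  unfold cubicBSpline
  split_ifs with h1' h2' h3' h4' h5'
  · have hx : x = 0 := le_antisymm h1' h0
    subst hx; norm_num
  all_goals first | rfl | linarith

lemma N2 {x : ℝ} (h0 : 1 ≤ x) (h1 : x ≤ 2) :
    cubicBSpline x = (-3 * x ^ 3 + 12 * x ^ 2 - 12 * x + 4) / 6 := by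
  unfold cubicBSpline
  split_ifs with h1' h2' h3' h4' h5'
  · linarith
  · have hx : x = 1 := le_antisymm h2' h0
    subst hx; norm_num
  all_goals first | rfl | linarith

lemma N3 {x : ℝ} (h0 : 2 ≤ x) (h1 : x ≤ 3) :
    cubicBSpline x = (3 * x ^ 3 - 24 * x ^ 2 + 60 * x - 44) / 6 := by
  unfold cubicBSpline
  split_ifs with h1' h2' h3' h4' h5'
  · linarith
  · linarith
  · have hx : x = 2 := le_antisymm h3' h0
    subst hx; norm_num
  all_goals first | rfl | linarith

lemma N4 {x : ℝ} (h0 : 3 ≤ x) (h1 : x ≤ 4) :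
    cubicBSpline x = (4 - x) ^ 3 / 6 := by
  unfold cubicBSpline
  split_ifs with h1' h2' h3' h4' h5'
  · linarith
  · linarith
  · linarith
  · have hx : x = 3 := le_antisymm h4' h0
    subst hx; norm_num
  all_goals first | rfl | linarith

lemma B_left {z : ℝ} (h : z ≤ -(3/2)) : blendSpline z = 0 := by
  unfold blendSpline
  rw [N0 (by linarith : 2 * z + 3 ≤ 0), N0 (by linarith : 2 * z + 2 ≤ 0),
    N0 (by linarith : 2 * z + 1 ≤ 0)]
  ring

lemma B_right {z : ℝ} (h : 3/2 ≤ z) : blendSpline z = 0 := by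
  unfold blendSpline
  rw [N5 (by linarith : (4:ℝ) ≤ 2 * z + 3), N5 (by linarith : (4:ℝ) ≤ 2 * z + 2),
    N5 (by linarith : (4:ℝ) ≤ 2 * z + 1)]
  ring

lemma key {t : ℝ} (h0 : 0 ≤ t) (h1 : t < 1) :
    blendSpline (t + 1) + blendSpline t + blendSpline (t - 1) + blendSpline (t - 2) = 1 := by
  unfold blendSpline
  rcases le_or_gt t (1/2) with h | h
  · rw [N5 (by linarith : (4:ℝ) ≤ 2 * (t + 1) + 3),
      N5 (by linarith : (4:ℝ) ≤ 2 * (t + 1) + 2),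
      N4 (by linarith : (3:ℝ) ≤ 2 * (t + 1) + 1) (by linarith),
      N4 (by linarith : (3:ℝ) ≤ 2 * t + 3) (by linarith),
      N3 (by linarith : (2:ℝ) ≤ 2 * t + 2) (by linarith),
      N2 (by linarith : (1:ℝ) ≤ 2 * t + 1) (by linarith),
      N2 (by linarith : (1:ℝ) ≤ 2 * (t - 1) + 3) (by linarith),
      N1 (by linarith : (0:ℝ) ≤ 2 * (t - 1) + 2) (by linarith),
      N0 (by linarith : 2 * (t - 1) + 1 ≤ 0),
      N0 (by linarith : 2 * (t - 2) + 3 ≤ 0),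
      N0 (by linarith : 2 * (t - 2) + 2 ≤ 0),
      N0 (by linarith : 2 * (t - 2) + 1 ≤ 0)]
    ring
  · rw [N5 (by linarith : (4:ℝ) ≤ 2 * (t + 1) + 3),
      N5 (by linarith : (4:ℝ) ≤ 2 * (t + 1) + 2),
      N5 (by linarith : (4:ℝ) ≤ 2 * (t + 1) + 1),
      N5 (by linarith : (4:ℝ) ≤ 2 * t + 3),
      N4 (by linarith : (3:ℝ) ≤ 2 * t + 2) (by linarith),
      N3 (by linarith : (2:ℝ) ≤ 2 * t + 1) (by linarith),
      N3 (by linarith : (2:ℝ) ≤ 2 * (t - 1) + 3) (by linarith),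
      N2 (by linarith : (1:ℝ) ≤ 2 * (t - 1) + 2) (by linarith),
      N1 (by linarith : (0:ℝ) ≤ 2 * (t - 1) + 1) (by linarith),
      N1 (by linarith : (0:ℝ) ≤ 2 * (t - 2) + 3) (by linarith),
      N0 (by linarith : 2 * (t - 2) + 2 ≤ 0),
      N0 (by linarith : 2 * (t - 2) + 1 ≤ 0)]
    ring

/-- The finset of integer translates that can contribute at `x`. -/
noncomputable def suppF (x : ℝ) : Finset ℤ := {⌊x⌋ - 1, ⌊x⌋, ⌊x⌋ + 1, ⌊x⌋ + 2}

lemma vanish (x : ℝ) {n : ℤ} (h : n ∉ suppF x) : blendSpline (x - n) = 0 := by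
  simp only [suppF, Finset.mem_insert, Finset.mem_singleton] at h
  push_neg at h
  have hfl : (⌊x⌋ : ℝ) ≤ x := Int.floor_le x
  have hlt : x < ⌊x⌋ + 1 := Int.lt_floor_add_one x
  rcases lt_or_ge n ⌊x⌋ with hn | hn
  · have hn2 : n ≤ ⌊x⌋ - 2 := by omega
    have : (n : ℝ) ≤ (⌊x⌋ : ℝ) - 2 := by exact_mod_cast hn2
    exact B_right (by linarith)
  · have hn2 : ⌊x⌋ + 3 ≤ n := by omega
    have : (⌊x⌋ : ℝ) + 3 ≤ (n : ℝ) := by exact_mod_cast hn2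
    exact B_left (by linarith)

lemma sum_suppF (x : ℝ) : ∑ n ∈ suppF x, blendSpline (x - n) = 1 := by
  have hfl : (⌊x⌋ : ℝ) ≤ x := Int.floor_le x
  have hlt : x < ⌊x⌋ + 1 := Int.lt_floor_add_one x
  have hsum : ∑ n ∈ suppF x, blendSpline (x - n) =
      blendSpline (x - (⌊x⌋ - 1 : ℤ)) + blendSpline (x - (⌊x⌋ : ℤ)) +
        blendSpline (x - (⌊x⌋ + 1 : ℤ)) + blendSpline (x - (⌊x⌋ + 2 : ℤ)) := by
    rw [suppF]
    rw [Finset.sum_insert (by simp <;> omega), Finset.sum_insert (by simp <;> omega),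
      Finset.sum_insert (by simp <;> omega), Finset.sum_singleton]
    ring
  rw [hsum]
  have e1 : x - ((⌊x⌋ : ℤ) - 1 : ℤ) = (x - ⌊x⌋) + 1 := by push_cast; try ring
  have e2 : x - ((⌊x⌋ : ℤ) : ℝ) = (x - ⌊x⌋) := by ring
  have e3 : x - ((⌊x⌋ : ℤ) + 1 : ℤ) = (x - ⌊x⌋) - 1 := by push_cast; try ring
  have e4 : x - ((⌊x⌋ : ℤ) + 2 : ℤ) = (x - ⌊x⌋) - 2 := by push_cast; try ring
  rw [e1, e3, e4]
  exact key (by linarith) (by linarith)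

theorem blendSpline_bivariate_partition_of_unity (x y : ℝ) :
    HasSum (fun p : ℤ × ℤ => blendSpline (x - p.1) * blendSpline (y - p.2)) 1 := by
  have h := hasSum_sum_of_ne_finset_zero (L := SummationFilter.unconditional (ℤ × ℤ)) (s := suppF x ×ˢ suppF y)
    (f := fun p : ℤ × ℤ => blendSpline (x - p.1) * blendSpline (y - p.2)) ?_
  · have : ∑ p ∈ suppF x ×ˢ suppF y, blendSpline (x - p.1) * blendSpline (y - p.2) = 1 := by
      rw [Finset.sum_product]
      have : ∀ a ∈ suppF x, ∑ b ∈ suppF y, blendSpline (x - a) * blendSpline (y - b)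
          = blendSpline (x - a) := by
        intro a _
        rw [← Finset.mul_sum, sum_suppF y, mul_one]
      rw [Finset.sum_congr rfl this, sum_suppF x]
    rwa [this] at h
  · intro p hp
    rw [Finset.mem_product, not_and_or] at hp
    rcases hp with h | h
    · rw [vanish x h, zero_mul]
    · rw [vanish y h, mul_zero]
end

section
/- The partition-of-unity blend of local plane models with the spline φ is globally curvature continuous: for arbitrary coefficient families a, b, c : ℤ × ℤ → ℝ, the function g : ℝ × ℝ → ℝ defined by g(x, y) = ∑_{(α,β) ∈ ℤ×ℤ} (a(α,β)·x + b(α,β)·y + c(α,β)) · φ(x − α) · φ(y − β) (a locally finite sum, since φ is compactly supported) is twice continuously differentiable on ℝ², i.e., ContDiff ℝ 2 g. -/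
open Real

/-- truncated cubic power -/
noncomputable def pp (t : ℝ) : ℝ := max t 0 ^ 3

lemma hasDerivAt_msq (x : ℝ) : HasDerivAt (fun t : ℝ => 3 * max t 0 ^ 2) (6 * max x 0) x := by
  rcases lt_trichotomy x 0 with hx | hx | hx
  · have h0 : HasDerivAt (fun _ : ℝ => (0 : ℝ)) 0 x := hasDerivAt_const x 0
    have : (fun t : ℝ => 3 * max t 0 ^ 2) =ᶠ[nhds x] fun _ => (0 : ℝ) := by
      filter_upwards [eventually_lt_nhds hx] with t ht
      rw [max_eq_right ht.le]; ring
    have := h0.congr_of_eventuallyEq this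
    simpa [max_eq_right hx.le] using this
  · subst hx
    rw [hasDerivAt_iff_tendsto_slope]
    simp only [max_self, mul_zero]
    apply squeeze_zero_norm (a := fun t : ℝ => 3 * |t|)
    · intro t
      rcases lt_trichotomy t 0 with ht | ht | ht
      · simp [slope_def_field, max_eq_right ht.le]
      · simp [ht, slope_def_field]
      · rw [slope_def_field]
        rw [max_eq_left ht.le]
        have h1 : (3 * t ^ 2 - 3 * max 0 0 ^ 2) / (t - 0) = 3 * t := by
          field_simp; simp; ring
        rw [h1, Real.norm_eq_abs, abs_of_pos (by positivity), abs_of_pos ht]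
    · have : Filter.Tendsto (fun t : ℝ => 3 * |t|) (nhds 0) (nhds 0) := by
        have h := ((continuous_const (y := (3:ℝ))).mul continuous_abs).tendsto (0 : ℝ)
        convert h using 2 <;> show (_ : ℝ) = (3 : ℝ) * |(_ : ℝ)| <;> simp
      exact this.mono_left nhdsWithin_le_nhds
  · have h0 : HasDerivAt (fun t : ℝ => 3 * t ^ 2) (3 * (2 * x)) x := by
      simpa using (hasDerivAt_pow 2 x).const_mul 3
    have : (fun t : ℝ => 3 * max t 0 ^ 2) =ᶠ[nhds x] fun t => 3 * t ^ 2 := by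
      filter_upwards [eventually_gt_nhds hx] with t ht
      rw [max_eq_left ht.le]
    have := h0.congr_of_eventuallyEq this
    rw [max_eq_left hx.le]
    exact this.congr_deriv (by ring)

lemma hasDerivAt_pp (x : ℝ) : HasDerivAt pp (3 * max x 0 ^ 2) x := by
  rcases lt_trichotomy x 0 with hx | hx | hx
  · have h0 : HasDerivAt (fun _ : ℝ => (0 : ℝ)) 0 x := hasDerivAt_const x 0
    have : pp =ᶠ[nhds x] fun _ => (0 : ℝ) := by
      filter_upwards [eventually_lt_nhds hx] with t ht
      rw [pp, max_eq_right ht.le]; ring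
    have := h0.congr_of_eventuallyEq this
    simpa [max_eq_right hx.le] using this
  · subst hx
    rw [hasDerivAt_iff_tendsto_slope]
    simp only [max_self, mul_zero]
    have h0 : (3 : ℝ) * 0 ^ 2 = 0 := by ring
    rw [h0]
    apply squeeze_zero_norm (a := fun t : ℝ => t ^ 2)
    · intro t
      rcases lt_trichotomy t 0 with ht | ht | ht
      · simp [slope_def_field, pp, max_eq_right ht.le]
        positivity
      · simp [ht, slope_def_field, pp]
      · rw [slope_def_field, pp, pp, max_eq_left ht.le]
        have h1 : (t ^ 3 - max 0 0 ^ 3) / (t - 0) = t ^ 2 := by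
          field_simp; simp; ring
        rw [h1, Real.norm_eq_abs, abs_of_pos (by positivity)]
    · have : Filter.Tendsto (fun t : ℝ => t ^ 2) (nhds 0) (nhds (0 : ℝ)) := by
        have := (continuous_pow 2).tendsto (0 : ℝ)
        simpa using this
      exact this.mono_left nhdsWithin_le_nhds
  · have h0 : HasDerivAt (fun t : ℝ => t ^ 3) (3 * x ^ 2) x := by
      simpa using hasDerivAt_pow 3 x
    have : pp =ᶠ[nhds x] fun t => t ^ 3 := by
      filter_upwards [eventually_gt_nhds hx] with t ht
      rw [pp, max_eq_left ht.le]
    have := h0.congr_of_eventuallyEq this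
    simpa [max_eq_left hx.le] using this

lemma contDiff_pp : ContDiff ℝ 2 pp := by
  have hd : deriv pp = fun x => 3 * max x 0 ^ 2 := by
    funext x; exact (hasDerivAt_pp x).deriv
  have h2 : deriv (fun x : ℝ => 3 * max x 0 ^ 2) = fun x => 6 * max x 0 := by
    funext x; exact (hasDerivAt_msq x).deriv
  have : (2 : WithTop ℕ∞) = 1 + 1 := by norm_num
  rw [this, contDiff_succ_iff_deriv]
  refine ⟨fun x => (hasDerivAt_pp x).differentiableAt, by simp, ?_⟩
  rw [hd, contDiff_one_iff_deriv, h2]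
  exact ⟨fun x => (hasDerivAt_msq x).differentiableAt,
    continuous_const.mul ((continuous_id.max continuous_const))⟩
lemma cubic_eq (x : ℝ) : cubicBSpline x =
    (pp x - 4 * pp (x - 1) + 6 * pp (x - 2) - 4 * pp (x - 3) + pp (x - 4)) / 6 := by
  unfold cubicBSpline pp
  split_ifs with h1 h2 h3 h4 h5
  · rw [max_eq_right h1, max_eq_right (by linarith), max_eq_right (by linarith),
      max_eq_right (by linarith), max_eq_right (by linarith)]; ring
  · rw [max_eq_left (by linarith), max_eq_right (by linarith), max_eq_right (by linarith),
      max_eq_right (by linarith), max_eq_right (by linarith)]; ring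
  · rw [max_eq_left (by linarith), max_eq_left (by linarith), max_eq_right (by linarith),
      max_eq_right (by linarith), max_eq_right (by linarith)]; ring
  · rw [max_eq_left (by linarith), max_eq_left (by linarith), max_eq_left (by linarith),
      max_eq_right (by linarith), max_eq_right (by linarith)]; ring
  · rw [max_eq_left (by linarith), max_eq_left (by linarith), max_eq_left (by linarith),
      max_eq_left (by linarith), max_eq_right (by linarith)]; ring
  · rw [max_eq_left (by linarith), max_eq_left (by linarith), max_eq_left (by linarith),
      max_eq_left (by linarith), max_eq_left (by linarith)]; ring

lemma cubic_zero {x : ℝ} (h : x ≤ 0 ∨ 4 ≤ x) : cubicBSpline x = 0 := by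
  unfold cubicBSpline
  rcases h with h | h
  · simp [h]
  · split_ifs with h1 h2 h3 h4 h5
    · rfl
    · linarith
    · linarith
    · linarith
    · have : x = 4 := le_antisymm h5 h
      subst this; norm_num
    · rfl

lemma contDiff_cubic : ContDiff ℝ 2 cubicBSpline := by
  have : cubicBSpline = fun x =>
      (pp x - 4 * pp (x - 1) + 6 * pp (x - 2) - 4 * pp (x - 3) + pp (x - 4)) / 6 := by
    funext x; exact cubic_eq x
  rw [this]
  have aff : ∀ c : ℝ, ContDiff ℝ 2 (fun x : ℝ => pp (x - c)) := fun c =>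
    contDiff_pp.comp (contDiff_id.sub contDiff_const)
  have h0 : ContDiff ℝ 2 (fun x : ℝ => pp x) := contDiff_pp
  exact (((((h0.sub ((aff 1).const_smul (4:ℝ))).add
    ((aff 2).const_smul (6:ℝ))).sub ((aff 3).const_smul (4:ℝ))).add (aff 4)).div_const 6)

lemma contDiff_blend : ContDiff ℝ 2 blendSpline := by
  have aff : ∀ c : ℝ, ContDiff ℝ 2 (fun x : ℝ => cubicBSpline (2 * x + c)) := fun c =>
    contDiff_cubic.comp ((contDiff_const.mul contDiff_id).add contDiff_const)
  exact ((contDiff_const.mul (aff 3)).add (aff 2)).add (contDiff_const.mul (aff 1))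

lemma blend_zero {x : ℝ} (h : 3 / 2 ≤ |x|) : blendSpline x = 0 := by
  unfold blendSpline
  rcases le_abs.mp h with h | h
  · rw [cubic_zero (Or.inr (by linarith)), cubic_zero (Or.inr (by linarith)),
      cubic_zero (Or.inr (by linarith))]; ring
  · rw [cubic_zero (Or.inl (by linarith)), cubic_zero (Or.inl (by linarith)),
      cubic_zero (Or.inl (by linarith))]; ring

theorem blend_of_planes_contDiff (a b c : ℤ × ℤ → ℝ) :
    ContDiff ℝ 2 (fun q : ℝ × ℝ =>
      ∑' p : ℤ × ℤ, (a p * q.1 + b p * q.2 + c p) *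
        blendSpline (q.1 - p.1) * blendSpline (q.2 - p.2)) := by
  rw [contDiff_iff_contDiffAt]
  intro q₀
  obtain ⟨x₀, y₀⟩ := q₀
  set S : Finset (ℤ × ℤ) := Finset.Icc (⌈x₀⌉ - 3, ⌈y₀⌉ - 3) (⌊x₀⌋ + 3, ⌊y₀⌋ + 3) with hS
  have hfin : ContDiff ℝ 2 (fun q : ℝ × ℝ => ∑ p ∈ S, (a p * q.1 + b p * q.2 + c p) *
      blendSpline (q.1 - p.1) * blendSpline (q.2 - p.2)) := by
    apply ContDiff.sum
    intro p _
    refine ContDiff.mul (ContDiff.mul ?_ ?_) ?_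
    · exact ((contDiff_const.mul contDiff_fst).add
        (contDiff_const.mul contDiff_snd)).add contDiff_const
    · exact contDiff_blend.comp (contDiff_fst.sub contDiff_const)
    · exact contDiff_blend.comp (contDiff_snd.sub contDiff_const)
  apply hfin.contDiffAt.congr_of_eventuallyEq
  have hmem : Metric.ball x₀ 1 ×ˢ Metric.ball y₀ 1 ∈ nhds ((x₀, y₀) : ℝ × ℝ) :=
    prod_mem_nhds (Metric.ball_mem_nhds _ one_pos) (Metric.ball_mem_nhds _ one_pos)
  filter_upwards [hmem] with q hq
  obtain ⟨hq1, hq2⟩ := hq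
  rw [Metric.mem_ball, Real.dist_eq] at hq1 hq2
  apply tsum_eq_sum
  intro p hp
  by_contra hne
  apply hp
  have hb1 : blendSpline (q.1 - ↑p.1) ≠ 0 := fun h => hne (by rw [h]; ring)
  have hb2 : blendSpline (q.2 - ↑p.2) ≠ 0 := fun h => hne (by rw [h]; ring)
  have h1 : |q.1 - (p.1 : ℝ)| < 3 / 2 := by
    by_contra h; exact hb1 (blend_zero (le_of_not_gt h))
  have h2 : |q.2 - (p.2 : ℝ)| < 3 / 2 := by
    by_contra h; exact hb2 (blend_zero (le_of_not_gt h))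
  rw [abs_sub_lt_iff] at hq1 hq2 h1 h2
  rw [hS, Finset.mem_Icc]
  have e1 : ⌈x₀⌉ ≤ p.1 + 3 := Int.ceil_le.mpr (by push_cast; linarith [hq1.1, hq1.2, h1.1, h1.2])
  have e2 : ⌈y₀⌉ ≤ p.2 + 3 := Int.ceil_le.mpr (by push_cast; linarith [hq2.1, hq2.2, h2.1, h2.2])
  have e3 : p.1 - 3 ≤ ⌊x₀⌋ := Int.le_floor.mpr (by push_cast; linarith [hq1.1, hq1.2, h1.1, h1.2])
  have e4 : p.2 - 3 ≤ ⌊y₀⌋ := Int.le_floor.mpr (by push_cast; linarith [hq2.1, hq2.2, h2.1, h2.2])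
  exact ⟨Prod.mk_le_mk.mpr ⟨by omega, by omega⟩, Prod.mk_le_mk.mpr ⟨by omega, by omega⟩⟩
end

section
/- The translates of the exponential blender ψ by integer multiples of a form a partition of unity: for every x ∈ ℝ, the family (fun k : ℤ => ψ(x − k·a)) has sum 1 (at most two terms are nonzero). -/
open Real

/-- The compactly supported exponential blender with smoothing parameter `s`
and support half-width `a`. -/
noncomputable def expBlender (s a : ℝ) (x : ℝ) : ℝ :=
  if x = 0 then 1
  else if a ≤ |x| then 0
  else 1 / (Real.exp (s * (1 / (1 - |x| / a) - 1 / (|x| / a))) + 1)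

lemma expBlender_eq_zero (s a y : ℝ) (ha : 0 < a) (h : a ≤ |y|) :
    expBlender s a y = 0 := by
  have hy : y ≠ 0 := by
    intro h0; rw [h0, abs_zero] at h; linarith
  rw [expBlender, if_neg hy, if_pos h]

lemma expBlender_pair (s a t : ℝ) (ha : 0 < a) (h0 : 0 < t) (h1 : t < a) :
    expBlender s a t + expBlender s a (t - a) = 1 := by
  have ht : t ≠ 0 := ne_of_gt h0
  have hta : t - a ≠ 0 := by intro h; apply absurd h1; simp; linarith
  have habs1 : |t| = t := abs_of_pos h0
  have habs2 : |t - a| = a - t := by rw [abs_of_neg (by linarith)]; ring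
  have hn1 : ¬ a ≤ |t| := by rw [habs1]; linarith
  have hn2 : ¬ a ≤ |t - a| := by rw [habs2]; linarith
  rw [expBlender, expBlender, if_neg ht, if_neg hta, if_neg hn1, if_neg hn2,
    habs1, habs2]
  have harg : s * (1 / (1 - (a - t) / a) - 1 / ((a - t) / a))
      = - (s * (1 / (1 - t / a) - 1 / (t / a))) := by
    have ha' : a ≠ 0 := ne_of_gt ha
    field_simp
    rw [sub_sub_cancel, one_div t, mul_sub (s * t), mul_assoc s t t⁻¹, mul_inv_cancel₀ ht]
    ring
  rw [harg]
  set u := s * (1 / (1 - t / a) - 1 / (t / a)) with hu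
  have he : Real.exp (-u) = 1 / Real.exp u := by
    rw [Real.exp_neg]; exact (inv_eq_one_div _)
  rw [he]
  have hpos : 0 < Real.exp u := Real.exp_pos u
  have hpos2 : Real.exp u + 1 ≠ 0 := by positivity
  field_simp
  ring

theorem expBlender_partition_of_unity (s a : ℝ) (hs : 0 < s) (ha : 0 < a) (x : ℝ) :
    HasSum (fun k : ℤ => expBlender s a (x - k * a)) 1 := by
  set n : ℤ := ⌊x / a⌋ with hn
  have hfl : (n : ℝ) ≤ x / a := Int.floor_le _
  have hfu : x / a < n + 1 := Int.lt_floor_add_one _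
  have hlow : (n : ℝ) * a ≤ x := (le_div_iff₀ ha).mp hfl
  have hhigh : x < ((n : ℝ) + 1) * a := by
    calc x = (x / a) * a := by field_simp
    _ < ((n : ℝ) + 1) * a := by exact mul_lt_mul_of_pos_right hfu ha
  by_cases hx : x = (n : ℝ) * a
  · -- exactly one nonzero term, at k = n
    have h1 : expBlender s a (x - n * a) = 1 := by
      rw [hx, sub_self, expBlender, if_pos rfl]
    have hzero : ∀ k : ℤ, k ≠ n → expBlender s a (x - k * a) = 0 := by
      intro k hk
      apply expBlender_eq_zero s a _ ha
      have : x - (k : ℝ) * a = ((n : ℝ) - k) * a := by rw [hx]; ring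
      rw [this, abs_mul, abs_of_pos ha]
      have h1le : (1 : ℝ) ≤ |(n : ℝ) - k| := by
        have : ((1 : ℤ) : ℝ) ≤ |((n - k : ℤ) : ℝ)| := by
          rw [← Int.cast_abs]
          exact_mod_cast Int.one_le_abs (sub_ne_zero.mpr (Ne.symm hk))
        simpa using this
      nlinarith
    have := hasSum_single (f := fun k : ℤ => expBlender s a (x - k * a)) n
      (fun b hb => hzero b hb)
    simpa only [h1] using this
  · -- two nonzero terms, at k = n and k = n+1
    have hlow' : (n : ℝ) * a < x := lt_of_le_of_ne hlow (Ne.symm hx)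
    set t := x - (n : ℝ) * a with htdef
    have ht0 : 0 < t := by simp [htdef]; linarith
    have ht1 : t < a := by simp [htdef]; nlinarith
    have hzero : ∀ k : ℤ, k ∉ ({n, n + 1} : Finset ℤ) →
        expBlender s a (x - k * a) = 0 := by
      intro k hk
      simp only [Finset.mem_insert, Finset.mem_singleton] at hk
      push_neg at hk
      obtain ⟨hk1, hk2⟩ := hk
      apply expBlender_eq_zero s a _ ha
      rcases lt_or_gt_of_ne hk1 with h | h
      · -- k < n, so k ≤ n - 1, x - k a ≥ x - (n-1) a > a
        have hk' : (k : ℝ) ≤ (n : ℝ) - 1 := by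
          exact_mod_cast Int.le_sub_one_of_lt h
        have : a ≤ x - k * a := by nlinarith
        rw [abs_of_pos (by linarith)]; exact this
      · -- k > n, k ≠ n+1, so k ≥ n+2
        have hk' : (n : ℝ) + 2 ≤ (k : ℝ) := by
          have : n + 2 ≤ k := by omega
          exact_mod_cast this
        have : a ≤ k * a - x := by nlinarith
        rw [abs_of_neg (by linarith)]; linarith
    have hsum : HasSum (fun k : ℤ => expBlender s a (x - k * a)) _ := hasSum_sum_of_ne_finset_zero (s := ({n, n + 1} : Finset ℤ)) hzero
    have hne : n ≠ n + 1 := by omega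
    rw [Finset.sum_pair hne] at hsum
    have h1 : x - (n : ℝ) * a = t := rfl
    have h2 : x - ((n : ℝ) + 1) * a = t - a := by rw [htdef]; ring
    have hval : expBlender s a (x - n * a) + expBlender s a (x - (n + 1 : ℤ) * a) = 1 := by
      push_cast
      rw [h1, h2]
      exact expBlender_pair s a t ha ht0 ht1
    rwa [hval] at hsum
end
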